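/- Every α-sequence v_1, ..., v_s in a graph G can be extended to an α-sequence v_1, ..., v_s, ..., v_r such that N(v_1, ..., v_{r-1}) is a δ-set in G. -/

import Mathlib

set_option linter.unusedSectionVars false

open Finset

/-- The common neighborhood `N(v_1, …, v_k)` of the first `k` terms of a sequence. -/
def commonNbrs {V : Type*} [Fintype V] (G : SimpleGraph V) [DecidableRel G.Adj]
    {r : ℕ} (v : Fin r → V) (k : ℕ) : Finset V :=
  Finset.univ.filter fun w => ∀ j : Fin r, (j : ℕ) < k → G.Adj (v j) w

/-- An α-sequence: `v 0` has maximum degree in `G`, and each subsequent `v i` lies in the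
common neighborhood of the previous terms and has maximum degree in the subgraph induced
on that common neighborhood. -/
def IsAlphaSeq {V : Type*} [Fintype V] [DecidableEq V] (G : SimpleGraph V) [DecidableRel G.Adj]
    (r : ℕ) (v : Fin r → V) : Prop :=
  (∀ h : 0 < r, ∀ w : V, G.degree w ≤ G.degree (v ⟨0, h⟩)) ∧
  ∀ i : Fin r, 0 < (i : ℕ) →
    v i ∈ commonNbrs G v i ∧
    ∀ w ∈ commonNbrs G v i,
      (commonNbrs G v i ∩ G.neighborFinset w).card ≤
        (commonNbrs G v i ∩ G.neighborFinset (v i)).card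

/-- A δ-set in `G`: every vertex of `S` has degree at most `n - |S|`. -/
def IsDeltaSet {V : Type*} [Fintype V] (G : SimpleGraph V) [DecidableRel G.Adj]
    (S : Finset V) : Prop :=
  ∀ v ∈ S, G.degree v ≤ Fintype.card V - S.card

section Aux

variable {V : Type*} [Fintype V] [DecidableEq V] (G : SimpleGraph V) [DecidableRel G.Adj]

lemma mem_commonNbrs {r : ℕ} {v : Fin r → V} {k : ℕ} {x : V} :
    x ∈ commonNbrs G v k ↔ ∀ j : Fin r, (j : ℕ) < k → G.Adj (v j) x := by
  simp [commonNbrs]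

lemma commonNbrs_zero {r : ℕ} (v : Fin r → V) : commonNbrs G v 0 = Finset.univ := by
  ext x; simp [mem_commonNbrs]

lemma commonNbrs_succ {r : ℕ} (v : Fin r → V) {k : ℕ} (hk : k < r) :
    commonNbrs G v (k + 1) = commonNbrs G v k ∩ G.neighborFinset (v ⟨k, hk⟩) := by
  ext x
  simp only [mem_commonNbrs, mem_inter, SimpleGraph.mem_neighborFinset]
  constructor
  · intro h
    exact ⟨fun j hj => h j (Nat.lt_succ_of_lt hj), h ⟨k, hk⟩ (Nat.lt_succ_self k)⟩
  · rintro ⟨h1, h2⟩ j hj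
    rcases Nat.lt_succ_iff_lt_or_eq.mp hj with h | h
    · exact h1 j h
    · have : j = ⟨k, hk⟩ := Fin.ext h
      rw [this]; exact h2

lemma commonNbrs_snoc {r : ℕ} (v : Fin r → V) (w : V) {k : ℕ} (hk : k ≤ r) :
    commonNbrs G (Fin.snoc v w) k = commonNbrs G v k := by
  ext x
  simp only [mem_commonNbrs]
  constructor
  · intro h j hj
    have := h j.castSucc (by simpa using hj)
    simpa [Fin.snoc_castSucc] using this
  · intro h j hj
    have hjr : (j : ℕ) < r := lt_of_lt_of_le hj hk
    have hj' : (Fin.snoc v w : Fin (r + 1) → V) j = v ⟨j, hjr⟩ := by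
      have hje : j = Fin.castSucc ⟨j, hjr⟩ := by ext; rfl
      conv_lhs => rw [hje]
      rw [Fin.snoc_castSucc]
    rw [hj']
    exact h _ hj

/-- Every term of an α-sequence lies in the common neighborhood of the preceding terms and
has maximal induced degree there. -/
lemma alpha_max {s : ℕ} {v : Fin s → V} (hα : IsAlphaSeq G s v) (i : Fin s) :
    v i ∈ commonNbrs G v i ∧
    ∀ x ∈ commonNbrs G v i,
      (commonNbrs G v i ∩ G.neighborFinset x).card ≤
        (commonNbrs G v i ∩ G.neighborFinset (v i)).card := by
  rcases Nat.eq_zero_or_pos (i : ℕ) with h1 | h1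
  · rw [h1, commonNbrs_zero]
    refine ⟨mem_univ _, fun x _ => ?_⟩
    rw [univ_inter, univ_inter]
    have hi0 : i = ⟨0, i.pos⟩ := Fin.ext h1
    have := hα.1 i.pos x
    rw [← hi0] at this
    exact this
  · exact hα.2 i h1

/-- If the full common neighborhood is empty, then `N(v_0,…,v_{s-2})` is a δ-set. -/
lemma base_delta {s : ℕ} {v : Fin s → V} (hα : IsAlphaSeq G s v)
    (h : commonNbrs G v s = ∅) : IsDeltaSet G (commonNbrs G v (s - 1)) := by
  rcases Nat.eq_zero_or_pos s with hs | hs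
  · subst hs
    intro x hx
    rw [h] at hx
    exact absurd hx (notMem_empty x)
  · intro x hx
    have hslt : s - 1 < s := Nat.sub_lt hs one_pos
    obtain ⟨hmem, hmax⟩ := alpha_max G hα ⟨s - 1, hslt⟩
    have hss : s - 1 + 1 = s := Nat.succ_pred_eq_of_pos hs
    have hlast : commonNbrs G v (s - 1) ∩ G.neighborFinset (v ⟨s - 1, hslt⟩) = ∅ := by
      have h2 := commonNbrs_succ G v (k := s - 1) hslt
      rw [hss] at h2
      rw [← h2, h]
    have hx0 : (commonNbrs G v (s - 1) ∩ G.neighborFinset x).card = 0 := by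
      have h3 := hmax x hx
      rw [hlast] at h3
      simpa using h3
    have hempty : commonNbrs G v (s - 1) ∩ G.neighborFinset x = ∅ := card_eq_zero.mp hx0
    have hsub : G.neighborFinset x ⊆ Finset.univ \ commonNbrs G v (s - 1) := by
      intro y hy
      rw [mem_sdiff]
      refine ⟨mem_univ _, fun hyS => ?_⟩
      have : y ∈ commonNbrs G v (s - 1) ∩ G.neighborFinset x := mem_inter.mpr ⟨hyS, hy⟩
      rw [hempty] at this
      exact absurd this (notMem_empty y)
    calc G.degree x = (G.neighborFinset x).card := rfl
      _ ≤ (Finset.univ \ commonNbrs G v (s - 1)).card := card_le_card hsub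
      _ = Fintype.card V - (commonNbrs G v (s - 1)).card := by
          rw [card_sdiff_of_subset (subset_univ _), card_univ]

/-- Appending a vertex of maximal induced degree in the common neighborhood gives an
α-sequence. -/
lemma isAlphaSeq_snoc {r : ℕ} {v : Fin r → V} (hα : IsAlphaSeq G r v) {w : V}
    (hw : w ∈ commonNbrs G v r)
    (hmax : ∀ x ∈ commonNbrs G v r,
      (commonNbrs G v r ∩ G.neighborFinset x).card ≤
        (commonNbrs G v r ∩ G.neighborFinset w).card) :
    IsAlphaSeq G (r + 1) (Fin.snoc v w) := by
  constructor
  · intro h x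
    rcases Nat.eq_zero_or_pos r with hr | hr
    · subst hr
      have h0 : (⟨0, h⟩ : Fin 1) = Fin.last 0 := rfl
      rw [h0, Fin.snoc_last]
      have h1 := hmax x (by rw [commonNbrs_zero]; exact mem_univ _)
      rw [commonNbrs_zero, univ_inter, univ_inter] at h1
      exact h1
    · have h0 : (⟨0, h⟩ : Fin (r + 1)) = Fin.castSucc ⟨0, hr⟩ := rfl
      rw [h0, Fin.snoc_castSucc]
      exact hα.1 hr x
  · intro i hi
    rcases lt_or_eq_of_le (Nat.lt_succ_iff.mp i.isLt) with hir | hir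
    · have hieq : (Fin.snoc v w : Fin (r + 1) → V) i = v ⟨i, hir⟩ := by
        have hje : i = Fin.castSucc ⟨i, hir⟩ := by ext; rfl
        conv_lhs => rw [hje]
        rw [Fin.snoc_castSucc]
      rw [commonNbrs_snoc G v w (le_of_lt hir), hieq]
      exact hα.2 ⟨i, hir⟩ hi
    · have hieq : (Fin.snoc v w : Fin (r + 1) → V) i = w := by
        have hje : i = Fin.last r := Fin.ext hir
        rw [hje, Fin.snoc_last]
      rw [commonNbrs_snoc G v w (le_of_eq hir), hieq, hir]
      exact ⟨hw, hmax⟩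

lemma aux_extend (n : ℕ) : ∀ (s : ℕ) (v : Fin s → V), IsAlphaSeq G s v →
    (commonNbrs G v s).card ≤ n →
    ∃ (r : ℕ) (h : s ≤ r) (u : Fin r → V), IsAlphaSeq G r u ∧
      (∀ i : Fin s, u (Fin.castLE h i) = v i) ∧
      IsDeltaSet G (commonNbrs G u (r - 1)) := by
  induction n with
  | zero =>
    intro s v hα hc
    have hS : commonNbrs G v s = ∅ := card_eq_zero.mp (Nat.le_zero.mp hc)
    exact ⟨s, le_refl s, v, hα, fun i => rfl, base_delta G hα hS⟩
  | succ n ih =>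
    intro s v hα hc
    by_cases hS : commonNbrs G v s = ∅
    · exact ⟨s, le_refl s, v, hα, fun i => rfl, base_delta G hα hS⟩
    · obtain ⟨w, hw, hmax⟩ := Finset.exists_max_image (commonNbrs G v s)
        (fun x => (commonNbrs G v s ∩ G.neighborFinset x).card)
        (nonempty_of_ne_empty hS)
      have hα' := isAlphaSeq_snoc G hα hw hmax
      have hsub : commonNbrs G (Fin.snoc v w) (s + 1) ⊆ commonNbrs G v s := by
        have hlv : (Fin.snoc v w : Fin (s + 1) → V) ⟨s, Nat.lt_succ_self s⟩ = w := by
          have hje : (⟨s, Nat.lt_succ_self s⟩ : Fin (s + 1)) = Fin.last s := rfl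
          rw [hje, Fin.snoc_last]
        have heq : commonNbrs G (Fin.snoc v w) (s + 1)
            = commonNbrs G v s ∩ G.neighborFinset w := by
          rw [commonNbrs_succ G (Fin.snoc v w) (k := s) (Nat.lt_succ_self s),
            commonNbrs_snoc G v w (le_refl s), hlv]
        rw [heq]
        exact inter_subset_left
      have hwnot : w ∉ commonNbrs G (Fin.snoc v w) (s + 1) := by
        intro hmem
        have h4 := (mem_commonNbrs G).mp hmem (Fin.last s) (Nat.lt_succ_self s)
        rw [Fin.snoc_last] at h4
        exact G.loopless.irrefl w h4
      have hlt : (commonNbrs G (Fin.snoc v w) (s + 1)).card < (commonNbrs G v s).card :=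
        card_lt_card ((Finset.ssubset_iff_of_subset hsub).mpr ⟨w, hw, hwnot⟩)
      have hcard : (commonNbrs G (Fin.snoc v w) (s + 1)).card ≤ n :=
        Nat.lt_succ_iff.mp (lt_of_lt_of_le hlt hc)
      obtain ⟨r, hr, u, hu, hagree, hδ⟩ := ih (s + 1) (Fin.snoc v w) hα' hcard
      refine ⟨r, le_trans (Nat.le_succ s) hr, u, hu, ?_, hδ⟩
      intro i
      have h1 := hagree i.castSucc
      rw [Fin.snoc_castSucc] at h1
      have h2 : Fin.castLE (le_trans (Nat.le_succ s) hr) i = Fin.castLE hr i.castSucc := by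
        ext; rfl
      rw [h2]
      exact h1

end Aux

/-- Every α-sequence `v_1, …, v_s` extends to an α-sequence `v_1, …, v_s, …, v_r`
such that `N(v_1, …, v_{r-1})` is a δ-set. -/
theorem alphaSeq_extend {V : Type*} [Fintype V] [DecidableEq V]
    (G : SimpleGraph V) [DecidableRel G.Adj] (s : ℕ) (v : Fin s → V)
    (hα : IsAlphaSeq G s v) :
    ∃ (r : ℕ) (h : s ≤ r) (u : Fin r → V), IsAlphaSeq G r u ∧
      (∀ i : Fin s, u (Fin.castLE h i) = v i) ∧
      IsDeltaSet G (commonNbrs G u (r - 1)) := by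
  exact aux_extend G (commonNbrs G v s).card s v hα (le_refl _)
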